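/- Let R be a discrete valuation ring with uniformizer π and finite residue field κ, let f ∈ R[x₀,…,x_n] be homogeneous of degree d ≥ 1 such that the affine cone CX = {f = 0} ⊂ 𝔸^{n+1} is smooth away from the origin over κ. Then for r ≥ 1, #CX(R/π^r) = Σ_{i=0}^{⌈r/d⌉−1} (#κ)^{(n+1)(d−1)i} · #(CX∖0)(R/π^{r−di}) + (#κ)^{(n+1)(r−⌈r/d⌉)}, where (CX∖0)(R/π^m) denotes tuples in CX(R/π^m) with at least one coordinate a unit. Moreover, by Hensel's lemma, #(CX∖0)(R/π^m) = (#κ)^{(m−1)n} · #(CX∖0)(κ) for m ≥ 1. -/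

import Mathlib

set_option linter.unusedSectionVars false
set_option maxHeartbeats 1000000
open Function MvPolynomial
namespace Stmt15


lemma card_sigma_fiber {X Y : Type*} [Finite X] [Finite Y] (g : X → Y) (k : ℕ)
    (hk : ∀ y : Y, Nat.card {x // g x = y} = k) : Nat.card X = k * Nat.card Y := by
  classical
  cases nonempty_fintype X
  cases nonempty_fintype Y
  rw [Nat.card_eq_fintype_card, Nat.card_eq_fintype_card,
    ← Fintype.card_congr (Equiv.sigmaFiberEquiv g), Fintype.card_sigma]
  have h : ∀ y : Y, Fintype.card {x // g x = y} = k := fun y => by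
    rw [← Nat.card_eq_fintype_card]; exact hk y
  simp [h, Finset.sum_const, mul_comm]

def fiberEquivKer {F M N : Type*} [AddGroup M] [AddGroup N] [FunLike F M N]
    [AddMonoidHomClass F M N] (g : F) (y : N) (m₀ : M)
    (h : g m₀ = y) : {m // g m = y} ≃ {m // g m = 0} where
  toFun m := ⟨m.1 - m₀, by rw [map_sub, m.2, h, sub_self]⟩
  invFun m := ⟨m.1 + m₀, by rw [map_add, m.2, h, zero_add]⟩
  left_inv m := by ext; simp
  right_inv m := by ext; simp

lemma card_comp_pred {F M N : Type*} [AddGroup M] [AddGroup N] [Finite M] [Finite N]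
    [FunLike F M N] [AddMonoidHomClass F M N]
    (g : F) (hg : Surjective g) (P : N → Prop) :
    Nat.card {m // P (g m)} = Nat.card {m // g m = 0} * Nat.card {n // P n} := by
  classical
  refine card_sigma_fiber (fun m : {m // P (g m)} => (⟨g m.1, m.2⟩ : {n // P n})) _ ?_
  rintro ⟨y, hy⟩
  obtain ⟨m₀, hm₀⟩ := hg y
  have e1 : {x : {m // P (g m)} // (⟨g x.1, x.2⟩ : {n // P n}) = ⟨y, hy⟩} ≃ {m // g m = y} :=
    { toFun := fun x => ⟨x.1.1, congrArg Subtype.val x.2⟩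
      invFun := fun m => ⟨⟨m.1, by rw [m.2]; exact hy⟩, Subtype.ext m.2⟩
      left_inv := fun x => by ext; rfl
      right_inv := fun m => by ext; rfl }
  rw [Nat.card_congr (e1.trans (fiberEquivKer g y m₀ hm₀))]

lemma card_eq_ker_mul {F M N : Type*} [AddGroup M] [AddGroup N] [Finite M] [Finite N]
    [FunLike F M N] [AddMonoidHomClass F M N] (g : F) (hg : Surjective g) :
    Nat.card M = Nat.card {m // g m = 0} * Nat.card N := by
  have h := card_comp_pred g hg (fun _ => True)
  rwa [Nat.card_congr (Equiv.subtypeUnivEquiv (fun _ => trivial)),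
    Nat.card_congr (Equiv.subtypeUnivEquiv (fun _ => trivial))] at h

lemma card_split {X : Type*} [Finite X] (P Q : X → Prop) :
    Nat.card {x // P x} = Nat.card {x // P x ∧ Q x} + Nat.card {x // P x ∧ ¬ Q x} := by
  classical
  rw [← Nat.card_sum]
  refine Nat.card_congr ?_
  exact ((Equiv.sumCompl (fun x : {x // P x} => Q x.1)).symm.trans
    (Equiv.sumCongr (Equiv.subtypeSubtypeEquivSubtypeInter P Q)
      (Equiv.subtypeSubtypeEquivSubtypeInter P (fun x => ¬ Q x))))

/-- linear equation count over a finite field -/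
lemma card_linear {K : Type*} [Field K] [Finite K] (k : ℕ) (c : Fin (k+1) → K) (b : K)
    (hc : ∃ j, c j ≠ 0) :
    Nat.card {z : Fin (k+1) → K // ∑ j, c j * z j = b} = Nat.card K ^ k := by
  classical
  obtain ⟨j₀, hj₀⟩ := hc
  let L : (Fin (k+1) → K) →+ K :=
    { toFun := fun z => ∑ j, c j * z j
      map_zero' := by simp
      map_add' := fun z w => by simp [mul_add, Finset.sum_add_distrib] }
  have hL : Surjective L := by
    intro t
    set z : Fin (k+1) → K := Pi.single j₀ (t / c j₀) with hz
    refine ⟨z, ?_⟩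
    have : L z = ∑ j, c j * z j := rfl
    rw [this, Finset.sum_eq_single j₀ (fun j _ hj => by rw [hz, Pi.single_eq_of_ne hj, mul_zero])
      (fun h => absurd (Finset.mem_univ _) h), hz, Pi.single_eq_same]
    field_simp
  obtain ⟨z₀, hz₀⟩ := hL b
  have e : {z : Fin (k+1) → K // ∑ j, c j * z j = b} ≃ {z // L z = 0} :=
    fiberEquivKer L b z₀ hz₀
  rw [Nat.card_congr e]
  have hcard := card_eq_ker_mul L hL
  have hq : 0 < Nat.card K := Nat.card_pos
  have hfun : Nat.card (Fin (k+1) → K) = Nat.card K ^ (k+1) := by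
    rw [Nat.card_fun]; simp
  rw [hfun] at hcard
  have : Nat.card K ^ k * Nat.card K = Nat.card {m // L m = 0} * Nat.card K := by
    rw [← hcard, pow_succ]
  exact (Nat.eq_of_mul_eq_mul_right hq this).symm

/-- first order Taylor expansion -/
lemma taylor {A : Type*} [CommRing A] {k : ℕ} (F : MvPolynomial (Fin k) A)
    (x y : Fin k → A) (t : A) :
    ∃ c, eval (fun j => x j + t * y j) F
      = eval x F + t * ∑ j, y j * eval x (pderiv j F) + t ^ 2 * c := by
  classical
  induction F using MvPolynomial.induction_on with
  | C a => exact ⟨0, by simp⟩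
  | add p q hp hq =>
      obtain ⟨cp, hcp⟩ := hp
      obtain ⟨cq, hcq⟩ := hq
      refine ⟨cp + cq, ?_⟩
      simp only [map_add, hcp, hcq, mul_add, Finset.sum_add_distrib]
      ring
  | mul_X p i hp =>
      obtain ⟨c, hc⟩ := hp
      refine ⟨(∑ j, y j * eval x (pderiv j p)) * y i + c * x i + t * (c * y i), ?_⟩
      have hsum : ∑ j, y j * eval x (pderiv j (p * X i))
          = (∑ j, y j * eval x (pderiv j p)) * x i + y i * eval x p := by
        have h1 : ∀ j, y j * eval x (pderiv j (p * X i))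
            = y j * (eval x (pderiv j p) * x i) + (if j = i then y j * eval x p else 0) := by
          intro j
          rcases eq_or_ne j i with rfl | hji
          · simp only [pderiv_mul, pderiv_X_self, mul_one, map_add, map_mul, eval_X,
              if_pos rfl, if_true, eq_self_iff_true, mul_add]
          · simp only [pderiv_mul, pderiv_X_of_ne (Ne.symm hji), mul_zero, add_zero,
              map_mul, eval_X, if_neg hji, add_zero]
        rw [Finset.sum_congr rfl (fun j _ => h1 j), Finset.sum_add_distrib,
          Finset.sum_ite_eq' Finset.univ i (fun j => y j * eval x p),
          if_pos (Finset.mem_univ i), Finset.sum_mul]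
        congr 1
        exact Finset.sum_congr rfl fun j _ => by ring
      rw [map_mul, hc, hsum, map_mul, eval_X, eval_X]
      ring



lemma homog_eval_scale {A : Type*} [CommRing A] {k d : ℕ} {f : MvPolynomial (Fin k) A}
    (hf : f.IsHomogeneous d) (c : A) (x : Fin k → A) :
    eval (fun j => c * x j) f = c ^ d * eval x f := by
  rw [eval_eq, eval_eq, Finset.mul_sum]
  refine Finset.sum_congr rfl fun s hs => ?_
  have hw : ∑ i ∈ s.support, s i = d := by
    have h := hf (mem_support_iff.mp hs)
    simpa [Finsupp.weight_apply, Finsupp.sum, Pi.one_apply, smul_eq_mul, mul_one] using h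
  calc coeff s f * ∏ i ∈ s.support, (c * x i) ^ s i
      = coeff s f * ((∏ i ∈ s.support, c ^ s i) * ∏ i ∈ s.support, x i ^ s i) := by
        rw [← Finset.prod_mul_distrib]
        simp [mul_pow]
    _ = c ^ d * (coeff s f * ∏ i ∈ s.support, x i ^ s i) := by
        rw [Finset.prod_pow_eq_pow_sum, hw]; ring

lemma eval_comp_hom {A B : Type*} [CommRing A] [CommRing B] (g : A →+* B) {k : ℕ}
    (y : Fin k → A) (F : MvPolynomial (Fin k) A) :
    eval (fun j => g (y j)) (F.map g) = g (eval y F) := by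
  rw [eval_map]
  have h := eval₂_comp_left g (RingHom.id A) y F
  simp only [RingHom.comp_id] at h
  show eval₂ g (⇑g ∘ y) F = _
  rw [← h]
  rfl



section DVR

variable {R : Type*} [CommRing R] [IsDomain R] [IsDiscreteValuationRing R] (π : R)

/-- quotient ring by `π ^ m` -/
abbrev Q (m : ℕ) : Type _ := R ⧸ Ideal.span {π ^ m}

lemma spanle {a b : ℕ} (h : b ≤ a) : Ideal.span {π ^ a} ≤ Ideal.span {π ^ b} :=
  Ideal.span_singleton_le_span_singleton.mpr (pow_dvd_pow π h)

/-- reduction map -/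
def rho {a b : ℕ} (h : b ≤ a) : Q π a →+* Q π b :=
  Ideal.Quotient.factor (spanle π h)

@[simp] lemma rho_mk {a b : ℕ} (h : b ≤ a) (x : R) :
    rho π h (Ideal.Quotient.mk _ x) = Ideal.Quotient.mk _ x :=
  Ideal.Quotient.factor_mk _ x

lemma rho_surjective {a b : ℕ} (h : b ≤ a) : Surjective (rho π h) := by
  intro x
  obtain ⟨u, rfl⟩ := Ideal.Quotient.mk_surjective x
  exact ⟨Ideal.Quotient.mk _ u, rho_mk π h u⟩

variable {π}

lemma mem_span_pow_mul (hπ : Irreducible π) (b c : ℕ) (y : R) :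
    π ^ b * y ∈ Ideal.span {π ^ (b + c)} ↔ y ∈ Ideal.span {π ^ c} := by
  simp only [Ideal.mem_span_singleton, pow_add]
  constructor
  · rintro ⟨z, hz⟩
    exact ⟨z, mul_left_cancel₀ (pow_ne_zero b hπ.ne_zero) (by rw [hz]; ring)⟩
  · rintro ⟨z, rfl⟩
    exact ⟨z, by ring⟩

variable (π)

/-- multiplication by `π ^ b` -/
def chi (b c : ℕ) : Q π c →ₗ[R] Q π (b + c) :=
  Submodule.mapQ _ _ (π ^ b • (LinearMap.id : R →ₗ[R] R)) (by
    intro x hx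
    simp only [Submodule.mem_comap, LinearMap.smul_apply, LinearMap.id_coe, id_eq, smul_eq_mul]
    rw [Ideal.mem_span_singleton] at hx ⊢
    obtain ⟨z, rfl⟩ := hx
    exact ⟨z, by rw [pow_add]; ring⟩)

@[simp] lemma chi_mk (b c : ℕ) (x : R) :
    chi π b c (Ideal.Quotient.mk _ x) = Ideal.Quotient.mk _ (π ^ b * x) := by
  show chi π b c (Submodule.Quotient.mk x) = _
  rw [chi, Submodule.mapQ_apply]
  rfl

variable {π}

lemma chi_injective (hπ : Irreducible π) (b c : ℕ) : Injective (chi π b c) := by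
  refine (injective_iff_map_eq_zero _).mpr ?_
  intro a ha
  obtain ⟨x, rfl⟩ := Ideal.Quotient.mk_surjective a
  rw [chi_mk] at ha
  rw [Ideal.Quotient.eq_zero_iff_mem] at ha ⊢
  exact (mem_span_pow_mul hπ b c x).mp ha

lemma rho_chi (b c : ℕ) (y : Q π c) : rho π (Nat.le_add_right b c) (chi π b c y) = 0 := by
  obtain ⟨x, rfl⟩ := Ideal.Quotient.mk_surjective y
  rw [chi_mk, rho_mk, Ideal.Quotient.eq_zero_iff_mem]
  exact Ideal.mem_span_singleton.mpr (dvd_mul_right _ x)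

/-- the kernel of reduction `Q (b+c) → Q b` is in bijection with `Q c` -/
noncomputable def kerEquiv (hπ : Irreducible π) (b c : ℕ) :
    Q π c ≃ {x : Q π (b + c) // rho π (Nat.le_add_right b c) x = 0} := by
  refine Equiv.ofBijective (fun y => ⟨chi π b c y, rho_chi b c y⟩) ⟨?_, ?_⟩
  · intro y y' h
    exact chi_injective hπ b c (congrArg Subtype.val h)
  · rintro ⟨x, hx⟩
    obtain ⟨u, rfl⟩ := Ideal.Quotient.mk_surjective x
    rw [rho_mk, Ideal.Quotient.eq_zero_iff_mem, Ideal.mem_span_singleton] at hx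
    obtain ⟨z, rfl⟩ := hx
    exact ⟨Ideal.Quotient.mk _ z, Subtype.ext (chi_mk π b c z)⟩

/-- units in the quotient -/
lemma isUnit_mk_iff (hπ : Irreducible π) {m : ℕ} (hm : 1 ≤ m) (u : R) :
    IsUnit (Ideal.Quotient.mk (Ideal.span {π ^ m}) u) ↔ u ∉ Ideal.span {π} := by
  constructor
  · intro hu hmem
    obtain ⟨w, hw⟩ := isUnit_iff_exists_inv.mp hu
    obtain ⟨v, rfl⟩ := Ideal.Quotient.mk_surjective w
    rw [← map_mul, ← map_one (Ideal.Quotient.mk (Ideal.span {π ^ m})),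
      Ideal.Quotient.mk_eq_mk_iff_sub_mem] at hw
    have h1 : u * v - 1 ∈ Ideal.span {π} := by
      have h := spanle π hm hw
      rwa [pow_one] at h
    have h2 : u * v ∈ Ideal.span {π} := Ideal.mul_mem_right v _ hmem
    have h3 : (1 : R) ∈ Ideal.span {π} := by
      have h := Ideal.sub_mem _ h2 h1
      simpa using h
    exact hπ.not_isUnit (Ideal.span_singleton_eq_top.mp ((Ideal.eq_top_iff_one _).mpr h3))
  · intro hu
    have : IsUnit u := by
      rw [← IsLocalRing.notMem_maximalIdeal, hπ.maximalIdeal_eq]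
      exact hu
    exact this.map _

end DVR


section DVR2

variable {R : Type*} [CommRing R] [IsDomain R] [IsDiscreteValuationRing R] {π : R}
variable [Finite (R ⧸ Ideal.span {π})]

noncomputable def epsilonQ (π : R) : Q π 1 ≃+* R ⧸ Ideal.span {π} :=
  Ideal.quotEquivOfEq (by rw [pow_one])

lemma finiteQ (hπ : Irreducible π) : ∀ m, Finite (Q π m)
  | 0 => by
      haveI : Subsingleton (Q π 0) := Ideal.Quotient.subsingleton_iff.mpr (by
        rw [pow_zero, Ideal.span_singleton_one])
      infer_instance
  | (m+1) => by
      haveI : Finite (Q π m) := finiteQ hπ m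
      haveI h1 : Finite (Q π 1) := Finite.of_equiv _ (epsilonQ π).toEquiv.symm
      classical
      haveI : ∀ y : Q π m, Finite {x : Q π (m+1) // rho π (Nat.le_succ m) x = y} := by
        intro y
        by_cases hy : ∃ x₀ : Q π (m+1), rho π (Nat.le_succ m) x₀ = y
        · obtain ⟨x₀, hx₀⟩ := hy
          have e := fiberEquivKer (rho π (Nat.le_succ m)) y x₀ hx₀
          exact Finite.of_equiv _ (e.trans (kerEquiv hπ m 1).symm).symm
        · haveI : IsEmpty {x : Q π (m+1) // rho π (Nat.le_succ m) x = y} :=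
            ⟨fun x => hy ⟨x.1, x.2⟩⟩
          infer_instance
      exact Finite.of_equiv _ (Equiv.sigmaFiberEquiv (rho π (Nat.le_succ m)))

lemma cardQ (hπ : Irreducible π) : ∀ m, Nat.card (Q π m) = Nat.card (R ⧸ Ideal.span {π}) ^ m
  | 0 => by
      haveI : Subsingleton (Q π 0) := Ideal.Quotient.subsingleton_iff.mpr (by
        rw [pow_zero, Ideal.span_singleton_one])
      rw [pow_zero, Nat.card_eq_one_iff_unique]
      exact ⟨inferInstance, ⟨0⟩⟩
  | (m+1) => by
      haveI := finiteQ hπ m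
      haveI := finiteQ hπ (m+1)
      have h := card_eq_ker_mul (rho π (Nat.le_succ m)) (rho_surjective π (Nat.le_succ m))
      rw [← Nat.card_congr (kerEquiv hπ m 1), Nat.card_congr (epsilonQ π).toEquiv,
        cardQ hπ m] at h
      rw [h, pow_succ, mul_comm]

/-- componentwise additive hom on tuples -/
def vecHom {M N : Type*} [AddCommGroup M] [AddCommGroup N] (g : M →+ N) (k : ℕ) :
    (Fin k → M) →+ (Fin k → N) where
  toFun x := fun j => g (x j)
  map_zero' := by ext j; simp
  map_add' x y := by ext j; simp

lemma vecHom_surjective {M N : Type*} [AddCommGroup M] [AddCommGroup N] (g : M →+ N) (k : ℕ)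
    (hg : Surjective g) : Surjective (vecHom g k) := by
  intro y
  choose x hx using fun j => hg (y j)
  exact ⟨x, funext hx⟩

def vecKerEquiv {M N : Type*} [AddCommGroup M] [AddCommGroup N] (g : M →+ N) (k : ℕ) :
    {x : Fin k → M // vecHom g k x = 0} ≃ (Fin k → {m : M // g m = 0}) where
  toFun x := fun j => ⟨x.1 j, congrFun x.2 j⟩
  invFun y := ⟨fun j => (y j).1, funext fun j => (y j).2⟩
  left_inv x := by ext; rfl
  right_inv y := by ext; rfl

/-- the reduction of tuples, counting a predicate on the base -/
lemma card_pred_rho (hπ : Irreducible π) (b c k : ℕ) (P : (Fin k → Q π b) → Prop) :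
    Nat.card {x : Fin k → Q π (b+c) // P (fun j => rho π (Nat.le_add_right b c) (x j))}
      = (Nat.card (R ⧸ Ideal.span {π}) ^ c) ^ k * Nat.card {y : Fin k → Q π b // P y} := by
  haveI := finiteQ hπ b
  haveI := finiteQ hπ (b+c)
  haveI := finiteQ hπ c
  have h := card_comp_pred (vecHom ((rho π (Nat.le_add_right b c)) : Q π (b+c) →+* Q π b).toAddMonoidHom k)
    (vecHom_surjective _ k (rho_surjective π (Nat.le_add_right b c))) P
  have hker : Nat.card {x : Fin k → Q π (b+c) //
      vecHom ((rho π (Nat.le_add_right b c)) : Q π (b+c) →+* Q π b).toAddMonoidHom k x = 0}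
      = (Nat.card (R ⧸ Ideal.span {π}) ^ c) ^ k := by
    rw [Nat.card_congr (vecKerEquiv _ k), Nat.card_fun]
    have e3 : {m : Q π (b+c) // (rho π (Nat.le_add_right b c)).toAddMonoidHom m = 0} ≃ Q π c :=
      (Equiv.subtypeEquivRight (fun x => Iff.rfl)).trans (kerEquiv hπ b c).symm
    rw [Nat.card_congr e3, cardQ hπ c]
    simp
  rw [← hker]
  exact h

end DVR2

section Main

variable {R : Type*} [CommRing R] [IsDomain R] [IsDiscreteValuationRing R] {π : R}
variable [Finite (R ⧸ Ideal.span {π})] {n : ℕ}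

/-- number of solutions in `(R/π^m)^{n+1}` -/
noncomputable def NA (π : R) (f : MvPolynomial (Fin (n+1)) R) (m : ℕ) : ℕ :=
  Nat.card {x : Fin (n + 1) → Q π m //
    eval x (f.map (Ideal.Quotient.mk (Ideal.span {π ^ m}))) = 0}

/-- number of solutions with a unit coordinate -/
noncomputable def NU (π : R) (f : MvPolynomial (Fin (n+1)) R) (m : ℕ) : ℕ :=
  Nat.card {x : Fin (n + 1) → Q π m //
    eval x (f.map (Ideal.Quotient.mk (Ideal.span {π ^ m}))) = 0 ∧ ∃ j, IsUnit (x j)}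

lemma exists_rep {k m : ℕ} (y : Fin k → Q π m) :
    ∃ yr : Fin k → R, (fun j => Ideal.Quotient.mk (Ideal.span {π ^ m}) (yr j)) = y := by
  choose yr h using fun j => Ideal.Quotient.mk_surjective (y j)
  exact ⟨yr, funext h⟩

lemma eval_mk (f : MvPolynomial (Fin (n+1)) R) (m : ℕ) (yr : Fin (n+1) → R) :
    eval (fun j => Ideal.Quotient.mk (Ideal.span {π ^ m}) (yr j))
        (f.map (Ideal.Quotient.mk (Ideal.span {π ^ m})))
      = Ideal.Quotient.mk (Ideal.span {π ^ m}) (eval yr f) :=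
  eval_comp_hom _ _ _

lemma eval_rho (f : MvPolynomial (Fin (n+1)) R) {a b : ℕ} (h : b ≤ a) (x : Fin (n+1) → Q π a) :
    eval (fun j => rho π h (x j)) (f.map (Ideal.Quotient.mk (Ideal.span {π ^ b})))
      = rho π h (eval x (f.map (Ideal.Quotient.mk (Ideal.span {π ^ a})))) := by
  have hm : f.map (Ideal.Quotient.mk (Ideal.span {π ^ b}))
      = (f.map (Ideal.Quotient.mk (Ideal.span {π ^ a}))).map (rho π h : Q π a →+* Q π b) := by
    rw [MvPolynomial.map_map]
    congr 1
  rw [hm, eval_comp_hom]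

lemma NA_split (hπ : Irreducible π) (f : MvPolynomial (Fin (n+1)) R) (m : ℕ) :
    NA π f m = NU π f m + Nat.card {x : Fin (n + 1) → Q π m //
      eval x (f.map (Ideal.Quotient.mk (Ideal.span {π ^ m}))) = 0 ∧ ¬ ∃ j, IsUnit (x j)} := by
  haveI := finiteQ hπ m
  exact card_split _ _

/-- step (b): non-unit solutions mod `π^{1+s}` correspond to points `y` mod `π^s`
with `π^{d-1} f(y) = 0`. -/
lemma NN_eq (hπ : Irreducible π) {d : ℕ} (hd : 1 ≤ d) {f : MvPolynomial (Fin (n+1)) R}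
    (hf : f.IsHomogeneous d) (s : ℕ) :
    Nat.card {x : Fin (n + 1) → Q π (1+s) //
        eval x (f.map (Ideal.Quotient.mk (Ideal.span {π ^ (1+s)}))) = 0 ∧ ¬ ∃ j, IsUnit (x j)}
      = Nat.card {y : Fin (n + 1) → Q π s //
          Ideal.Quotient.mk (Ideal.span {π ^ s}) (π ^ (d-1))
            * eval y (f.map (Ideal.Quotient.mk (Ideal.span {π ^ s}))) = 0} := by
  classical
  symm
  -- key computation
  have key : ∀ yr : Fin (n+1) → R,
      (eval (fun j => Ideal.Quotient.mk (Ideal.span {π ^ (1+s)}) (π * yr j))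
          (f.map (Ideal.Quotient.mk (Ideal.span {π ^ (1+s)}))) = 0
        ↔ Ideal.Quotient.mk (Ideal.span {π ^ s}) (π ^ (d-1))
            * eval (fun j => Ideal.Quotient.mk (Ideal.span {π ^ s}) (yr j))
              (f.map (Ideal.Quotient.mk (Ideal.span {π ^ s}))) = 0) := by
    intro yr
    rw [eval_mk, eval_mk, homog_eval_scale hf π yr, ← map_mul,
      Ideal.Quotient.eq_zero_iff_mem, Ideal.Quotient.eq_zero_iff_mem]
    have hdec : π ^ d * eval yr f = π ^ 1 * (π ^ (d-1) * eval yr f) := by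
      rw [← mul_assoc, ← pow_add]
      congr 2
      omega
    rw [hdec]
    exact mem_span_pow_mul hπ 1 s _
  have hnonunit : ∀ u : R, u ∈ Ideal.span {π} →
      ¬ IsUnit (Ideal.Quotient.mk (Ideal.span {π ^ (1+s)}) u) := by
    intro u hu hun
    exact (isUnit_mk_iff hπ (by omega) u).mp hun hu
  refine Nat.card_congr (Equiv.ofBijective
    (fun y => (⟨fun j => chi π 1 s (y.1 j), ?_, ?_⟩ : {x : Fin (n + 1) → Q π (1+s) //
        eval x (f.map (Ideal.Quotient.mk (Ideal.span {π ^ (1+s)}))) = 0 ∧ ¬ ∃ j, IsUnit (x j)}))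
    ⟨?_, ?_⟩)
  · -- eval condition
    obtain ⟨yr, hyr⟩ := exists_rep y.1
    have hy2 := y.2
    rw [← hyr] at hy2 ⊢
    simp only [chi_mk, pow_one]
    exact (key yr).mpr hy2
  · -- nonunit condition
    rintro ⟨j, hj⟩
    obtain ⟨yr, hyr⟩ := exists_rep y.1
    rw [← hyr] at hj
    simp only [chi_mk, pow_one] at hj
    exact hnonunit _ (Ideal.mem_span_singleton.mpr (dvd_mul_right π _)) hj
  · -- injective
    intro y y' h
    have h' := congrArg Subtype.val h
    ext j
    exact chi_injective hπ 1 s (congrFun h' j)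
  · -- surjective
    rintro ⟨x, hx1, hx2⟩
    push_neg at hx2
    obtain ⟨xr, hxr⟩ := exists_rep x
    have hmem : ∀ j, xr j ∈ Ideal.span {π} := by
      intro j
      by_contra hmemj
      exact hx2 j (by rw [← hxr]; exact (isUnit_mk_iff hπ (by omega) (xr j)).mpr hmemj)
    choose yr hyr using fun j => Ideal.mem_span_singleton'.mp (hmem j)
    have hx' : ∀ j, x j = chi π 1 s (Ideal.Quotient.mk (Ideal.span {π ^ s}) (yr j)) := by
      intro j
      have hxj : Ideal.Quotient.mk (Ideal.span {π ^ (1+s)}) (xr j) = x j := congrFun hxr j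
      rw [chi_mk, pow_one, ← hxj, ← hyr j, mul_comm]
    refine ⟨⟨fun j => Ideal.Quotient.mk (Ideal.span {π ^ s}) (yr j), ?_⟩, ?_⟩
    · -- y condition
      refine (key yr).mp ?_
      have : (fun j => Ideal.Quotient.mk (Ideal.span {π ^ (1+s)}) (π * yr j)) = x := by
        funext j
        rw [hx' j, chi_mk, pow_one]
      rw [this]
      exact hx1
    · -- maps to x
      ext j
      exact (hx' j).symm

/-- counting `{y mod π^(b+c) : π^c * f(y) = 0}` when `c` divides out -/
lemma NB_reduce (hπ : Irreducible π) (f : MvPolynomial (Fin (n+1)) R) (b c : ℕ) :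
    Nat.card {y : Fin (n + 1) → Q π (b+c) //
        Ideal.Quotient.mk (Ideal.span {π ^ (b+c)}) (π ^ c)
          * eval y (f.map (Ideal.Quotient.mk (Ideal.span {π ^ (b+c)}))) = 0}
      = (Nat.card (R ⧸ Ideal.span {π}) ^ c) ^ (n+1) * NA π f b := by
  have hiff : ∀ y : Fin (n + 1) → Q π (b+c),
      (Ideal.Quotient.mk (Ideal.span {π ^ (b+c)}) (π ^ c)
          * eval y (f.map (Ideal.Quotient.mk (Ideal.span {π ^ (b+c)}))) = 0)
      ↔ eval (fun j => rho π (Nat.le_add_right b c) (y j))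
          (f.map (Ideal.Quotient.mk (Ideal.span {π ^ b}))) = 0 := by
    intro y
    rw [eval_rho]
    obtain ⟨u, hu⟩ := Ideal.Quotient.mk_surjective
      (eval y (f.map (Ideal.Quotient.mk (Ideal.span {π ^ (b+c)}))))
    rw [← hu, rho_mk, ← map_mul, Ideal.Quotient.eq_zero_iff_mem, Ideal.Quotient.eq_zero_iff_mem]
    have : π ^ c * u ∈ Ideal.span {π ^ (b+c)} ↔ u ∈ Ideal.span {π ^ b} := by
      have h2 := mem_span_pow_mul hπ c b u
      rwa [add_comm c b] at h2
    exact this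
  rw [Nat.card_congr (Equiv.subtypeEquivRight hiff)]
  exact card_pred_rho hπ b c (n+1)
    (fun z => eval z (f.map (Ideal.Quotient.mk (Ideal.span {π ^ b}))) = 0)

/-- counting `{y mod π^s : π^(d-1) * f(y) = 0}` when the condition is vacuous -/
lemma NB_triv (hπ : Irreducible π) (f : MvPolynomial (Fin (n+1)) R) {s e : ℕ} (hse : s ≤ e) :
    Nat.card {y : Fin (n + 1) → Q π s //
        Ideal.Quotient.mk (Ideal.span {π ^ s}) (π ^ e)
          * eval y (f.map (Ideal.Quotient.mk (Ideal.span {π ^ s}))) = 0}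
      = (Nat.card (R ⧸ Ideal.span {π}) ^ s) ^ (n+1) := by
  haveI := finiteQ hπ s
  have hzero : (Ideal.Quotient.mk (Ideal.span {π ^ s}) (π ^ e)) = 0 := by
    rw [Ideal.Quotient.eq_zero_iff_mem]
    exact Ideal.mem_span_singleton.mpr (pow_dvd_pow π hse)
  have htriv : ∀ y : Fin (n + 1) → Q π s,
      Ideal.Quotient.mk (Ideal.span {π ^ s}) (π ^ e)
        * eval y (f.map (Ideal.Quotient.mk (Ideal.span {π ^ s}))) = 0 := by
    intro y
    rw [hzero, zero_mul]
  rw [Nat.card_congr (Equiv.subtypeUnivEquiv htriv), Nat.card_fun, cardQ hπ s]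
  simp

end Main

section Hensel

variable {R : Type*} [CommRing R] [IsDomain R] [IsDiscreteValuationRing R] {π : R}
variable [Finite (R ⧸ Ideal.span {π})] {n : ℕ}

lemma hensel_step (hπ : Irreducible π) (f : MvPolynomial (Fin (n+1)) R)
    (hsmooth : ∀ x : Fin (n + 1) → R ⧸ Ideal.span {π},
      (∃ j, x j ≠ 0) →
      MvPolynomial.eval x (f.map (Ideal.Quotient.mk (Ideal.span {π}))) = 0 →
      ∃ j, MvPolynomial.eval x
        (MvPolynomial.pderiv j (f.map (Ideal.Quotient.mk (Ideal.span {π})))) ≠ 0)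
    (m : ℕ) (hm : 1 ≤ m) :
    NU π f (m+1) = Nat.card (R ⧸ Ideal.span {π}) ^ n * NU π f m := by
  classical
  haveI := finiteQ hπ m
  haveI := finiteQ hπ (m+1)
  haveI := finiteQ hπ 1
  haveI : (Ideal.span {π ^ 1}).IsMaximal := by
    rw [pow_one]
    exact PrincipalIdealRing.isMaximal_of_irreducible hπ
  letI : Field (Q π 1) := Ideal.Quotient.field _
  have hm0 : m ≠ 0 := by omega
  have hq1 : Nat.card (Q π 1) = Nat.card (R ⧸ Ideal.span {π}) :=
    Nat.card_congr (epsilonQ π).toEquiv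
  rw [NU, NU, ← hq1]
  set g : {x : Fin (n + 1) → Q π (m+1) //
        eval x (f.map (Ideal.Quotient.mk (Ideal.span {π ^ (m+1)}))) = 0 ∧ ∃ j, IsUnit (x j)}
      → {x : Fin (n + 1) → Q π m //
        eval x (f.map (Ideal.Quotient.mk (Ideal.span {π ^ m}))) = 0 ∧ ∃ j, IsUnit (x j)} :=
    fun x => ⟨fun j => rho π (Nat.le_succ m) (x.1 j), by
        rw [eval_rho, x.2.1, map_zero], by
        obtain ⟨j, hj⟩ := x.2.2
        exact ⟨j, hj.map _⟩⟩ with hg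
  refine card_sigma_fiber g _ ?_
  rintro ⟨y, hy1, hy2⟩
  obtain ⟨yr, rfl⟩ := exists_rep y
  -- extract data
  have hy1' := hy1
  rw [eval_mk, Ideal.Quotient.eq_zero_iff_mem, Ideal.mem_span_singleton] at hy1'
  obtain ⟨e, he⟩ := hy1'
  obtain ⟨j₀, hj₀⟩ := id hy2
  have hj₀' : yr j₀ ∉ Ideal.span {π} :=
    (isUnit_mk_iff hπ hm (yr j₀)).mp hj₀
  -- smoothness gives a unit coefficient
  have h1 : ∃ j, Ideal.Quotient.mk (Ideal.span {π}) (yr j) ≠ 0 :=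
    ⟨j₀, by rwa [Ne, Ideal.Quotient.eq_zero_iff_mem]⟩
  have h2 : eval (fun j => Ideal.Quotient.mk (Ideal.span {π}) (yr j))
      (f.map (Ideal.Quotient.mk (Ideal.span {π}))) = 0 := by
    rw [eval_comp_hom, he, Ideal.Quotient.eq_zero_iff_mem]
    exact Ideal.mem_span_singleton.mpr ((dvd_pow_self π hm0).mul_right e)
  obtain ⟨jd, hjd⟩ := hsmooth _ h1 h2
  rw [pderiv_map, eval_comp_hom] at hjd
  -- coefficients of the linear equation
  set c : Fin (n+1) → Q π 1 :=
    fun j => Ideal.Quotient.mk (Ideal.span {π ^ 1}) (eval yr (pderiv j f)) with hc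
  have hcjd : c jd ≠ 0 := by
    rw [hc, Ne, Ideal.Quotient.eq_zero_iff_mem, pow_one]
    rwa [Ne, Ideal.Quotient.eq_zero_iff_mem] at hjd
  set eb : Q π 1 := Ideal.Quotient.mk (Ideal.span {π ^ 1}) e with heb
  -- key computation via Taylor expansion
  have key : ∀ zr : Fin (n+1) → R,
      (eval (fun j => Ideal.Quotient.mk (Ideal.span {π ^ (m+1)}) (yr j + π ^ m * zr j))
          (f.map (Ideal.Quotient.mk (Ideal.span {π ^ (m+1)}))) = 0
        ↔ ∑ j, c j * (Ideal.Quotient.mk (Ideal.span {π ^ 1}) (zr j)) = - eb) := by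
    intro zr
    obtain ⟨cc, hcc⟩ := taylor f yr zr (π ^ m)
    rw [eval_mk, hcc, he]
    have hrw : π ^ m * e + π ^ m * (∑ j, zr j * eval yr (pderiv j f)) + (π ^ m) ^ 2 * cc
        = π ^ m * (e + (∑ j, zr j * eval yr (pderiv j f)) + π ^ m * cc) := by ring
    rw [hrw, Ideal.Quotient.eq_zero_iff_mem, mem_span_pow_mul hπ m 1,
      ← Ideal.Quotient.eq_zero_iff_mem]
    have hz : Ideal.Quotient.mk (Ideal.span {π ^ 1}) (π ^ m * cc) = 0 := by
      rw [Ideal.Quotient.eq_zero_iff_mem, pow_one]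
      exact Ideal.mem_span_singleton.mpr ((dvd_pow_self π hm0).mul_right cc)
    have hS : Ideal.Quotient.mk (Ideal.span {π ^ 1}) (∑ j, zr j * eval yr (pderiv j f))
        = ∑ j, c j * Ideal.Quotient.mk (Ideal.span {π ^ 1}) (zr j) := by
      rw [map_sum]
      refine Finset.sum_congr rfl fun j _ => ?_
      rw [map_mul, hc, mul_comm]
    rw [map_add, map_add, hz, add_zero, hS, add_comm, add_eq_zero_iff_eq_neg]
  have keyunit : ∀ zr : Fin (n+1) → R,
      IsUnit (Ideal.Quotient.mk (Ideal.span {π ^ (m+1)}) (yr j₀ + π ^ m * zr j₀)) := by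
    intro zr
    refine (isUnit_mk_iff hπ (by omega) _).mpr ?_
    intro hmem
    apply hj₀'
    have hz : π ^ m * zr j₀ ∈ Ideal.span {π} :=
      Ideal.mem_span_singleton.mpr ((dvd_pow_self π hm0).mul_right _)
    have := Ideal.sub_mem _ hmem hz
    simpa using this
  have keyrho : ∀ (zr : Fin (n+1) → R) (j : Fin (n+1)),
      rho π (Nat.le_succ m) (Ideal.Quotient.mk (Ideal.span {π ^ (m+1)}) (yr j + π ^ m * zr j))
        = Ideal.Quotient.mk (Ideal.span {π ^ m}) (yr j) := by
    intro zr j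
    rw [rho_mk, Ideal.Quotient.mk_eq_mk_iff_sub_mem]
    have : yr j + π ^ m * zr j - yr j = π ^ m * zr j := by ring
    rw [this]
    exact Ideal.mem_span_singleton.mpr (dvd_mul_right _ _)
  -- the fiber is in bijection with an affine hyperplane
  let T : {z : Fin (n+1) → Q π 1 // ∑ j, c j * z j = - eb} →
      {x : {x : Fin (n + 1) → Q π (m+1) //
          eval x (f.map (Ideal.Quotient.mk (Ideal.span {π ^ (m+1)}))) = 0 ∧ ∃ j, IsUnit (x j)} //
        g x = ⟨fun j => Ideal.Quotient.mk (Ideal.span {π ^ m}) (yr j), hy1, hy2⟩} :=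
    fun z => ⟨⟨fun j => Ideal.Quotient.mk (Ideal.span {π ^ (m+1)}) (yr j) + chi π m 1 (z.1 j), by
      obtain ⟨zr, hz⟩ := exists_rep z.1
      have hzj : ∀ j, z.1 j = Ideal.Quotient.mk (Ideal.span {π ^ 1}) (zr j) :=
        fun j => (congrFun hz j).symm
      have heq : (fun j => Ideal.Quotient.mk (Ideal.span {π ^ (m+1)}) (yr j) + chi π m 1 (z.1 j))
          = fun j => Ideal.Quotient.mk (Ideal.span {π ^ (m+1)}) (yr j + π ^ m * zr j) := by
        funext j
        rw [hzj j, chi_mk, ← map_add]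
      rw [heq]
      refine (key zr).mpr ?_
      have hsum : ∑ j, c j * Ideal.Quotient.mk (Ideal.span {π ^ 1}) (zr j) = ∑ j, c j * z.1 j :=
        Finset.sum_congr rfl fun j _ => by rw [hzj j]
      rw [hsum]
      exact z.2, by
      obtain ⟨zr, hz⟩ := exists_rep z.1
      have hzj : ∀ j, z.1 j = Ideal.Quotient.mk (Ideal.span {π ^ 1}) (zr j) :=
        fun j => (congrFun hz j).symm
      refine ⟨j₀, ?_⟩
      show IsUnit (Ideal.Quotient.mk (Ideal.span {π ^ (m+1)}) (yr j₀) + chi π m 1 (z.1 j₀))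
      have heq : Ideal.Quotient.mk (Ideal.span {π ^ (m+1)}) (yr j₀) + chi π m 1 (z.1 j₀)
          = Ideal.Quotient.mk (Ideal.span {π ^ (m+1)}) (yr j₀ + π ^ m * zr j₀) := by
        rw [hzj j₀, chi_mk, ← map_add]
      rw [heq]
      exact keyunit zr⟩, by
      apply Subtype.ext
      show (fun j => rho π (Nat.le_succ m)
          (Ideal.Quotient.mk (Ideal.span {π ^ (m+1)}) (yr j) + chi π m 1 (z.1 j)))
        = fun j => Ideal.Quotient.mk (Ideal.span {π ^ m}) (yr j)
      obtain ⟨zr, hz⟩ := exists_rep z.1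
      have hzj : ∀ j, z.1 j = Ideal.Quotient.mk (Ideal.span {π ^ 1}) (zr j) :=
        fun j => (congrFun hz j).symm
      funext j
      rw [hzj j, chi_mk, ← map_add]
      exact keyrho zr j⟩
  have hTinj : Function.Injective T := by
    intro z z' h
    apply Subtype.ext
    funext j
    have hv := congrFun (congrArg (fun w => w.1.1) h) j
    simp only [T] at hv
    exact chi_injective hπ m 1 (add_left_cancel hv)
  have hTsurj : Function.Surjective T := by
    rintro ⟨⟨xv, hx1, hx2⟩, hfib⟩
    have hfibv : (fun j => rho π (Nat.le_succ m) (xv j))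
        = (fun j => Ideal.Quotient.mk (Ideal.span {π ^ m}) (yr j)) :=
      congrArg Subtype.val hfib
    obtain ⟨xr, hxr⟩ := exists_rep xv
    have hsub : ∀ j, xr j - yr j ∈ Ideal.span {π ^ m} := by
      intro j
      rw [← Ideal.Quotient.mk_eq_mk_iff_sub_mem]
      have h1 : rho π (Nat.le_succ m) (Ideal.Quotient.mk (Ideal.span {π ^ (m+1)}) (xr j))
          = Ideal.Quotient.mk (Ideal.span {π ^ m}) (yr j) := by
        rw [congrFun hxr j]
        exact congrFun hfibv j
      rwa [rho_mk] at h1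
    choose wr hwr using fun j => Ideal.mem_span_singleton.mp (hsub j)
    have hxj : ∀ j, xr j = yr j + π ^ m * wr j := fun j => by
      linear_combination (hwr j)
    have hxv : xv = fun j => Ideal.Quotient.mk (Ideal.span {π ^ (m+1)}) (yr j + π ^ m * wr j) := by
      funext j
      rw [← congrFun hxr j, hxj j]
    refine ⟨⟨fun j => Ideal.Quotient.mk (Ideal.span {π ^ 1}) (wr j), ?_⟩, ?_⟩
    · have hx1' := hx1
      rw [hxv] at hx1'
      exact (key wr).mp hx1'
    · apply Subtype.ext
      apply Subtype.ext
      show (fun j => Ideal.Quotient.mk (Ideal.span {π ^ (m+1)}) (yr j)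
          + chi π m 1 (Ideal.Quotient.mk (Ideal.span {π ^ 1}) (wr j))) = xv
      funext j
      rw [chi_mk, ← map_add, hxv]
  rw [← card_linear n c (-eb) ⟨jd, hcjd⟩]
  exact Nat.card_congr (Equiv.ofBijective T ⟨hTinj, hTsurj⟩).symm

end Hensel

section Assemble

variable {R : Type*} [CommRing R] [IsDomain R] [IsDiscreteValuationRing R] {π : R}
variable [Finite (R ⧸ Ideal.span {π})] {n : ℕ}

lemma NU_closed (hπ : Irreducible π) (f : MvPolynomial (Fin (n+1)) R)
    (hsmooth : ∀ x : Fin (n + 1) → R ⧸ Ideal.span {π},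
      (∃ j, x j ≠ 0) →
      MvPolynomial.eval x (f.map (Ideal.Quotient.mk (Ideal.span {π}))) = 0 →
      ∃ j, MvPolynomial.eval x
        (MvPolynomial.pderiv j (f.map (Ideal.Quotient.mk (Ideal.span {π})))) ≠ 0) :
    ∀ m : ℕ, 1 ≤ m →
      NU π f m = Nat.card (R ⧸ Ideal.span {π}) ^ ((m - 1) * n) * NU π f 1 := by
  refine Nat.le_induction ?_ ?_
  · simp
  · intro m hm ih
    obtain ⟨k, rfl⟩ : ∃ k, m = k + 1 := ⟨m - 1, by omega⟩
    rw [hensel_step hπ f hsmooth (k+1) hm, ih, ← mul_assoc, ← pow_add]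
    congr 2
    simp only [Nat.add_sub_cancel]
    ring

lemma NU_one_eq (hπ : Irreducible π) (f : MvPolynomial (Fin (n+1)) R) :
    NU π f 1 = Nat.card {x : Fin (n + 1) → R ⧸ Ideal.span {π} //
      eval x (f.map (Ideal.Quotient.mk (Ideal.span {π}))) = 0 ∧ ∃ j, IsUnit (x j)} := by
  classical
  haveI : (Ideal.span {π}).IsMaximal := PrincipalIdealRing.isMaximal_of_irreducible hπ
  letI : Field (R ⧸ Ideal.span {π}) := Ideal.Quotient.field _
  have hspan : Ideal.span {π ^ 1} = Ideal.span {π} := by rw [pow_one]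
  set E : Q π 1 →+* R ⧸ Ideal.span {π} :=
    Ideal.Quotient.factor (le_of_eq hspan) with hE
  have hEmk : ∀ u : R, E (Ideal.Quotient.mk (Ideal.span {π ^ 1}) u)
      = Ideal.Quotient.mk (Ideal.span {π}) u := fun u => Ideal.Quotient.factor_mk _ u
  have hmapE : f.map (Ideal.Quotient.mk (Ideal.span {π}))
      = (f.map (Ideal.Quotient.mk (Ideal.span {π ^ 1}))).map E := by
    rw [MvPolynomial.map_map]
    congr 1
  have hkunit : ∀ u : R, IsUnit (Ideal.Quotient.mk (Ideal.span {π}) u) ↔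
      u ∉ Ideal.span {π} := by
    intro u
    rw [isUnit_iff_ne_zero, Ne, Ideal.Quotient.eq_zero_iff_mem]
  refine Nat.card_congr (Equiv.ofBijective (fun x =>
    ⟨fun j => E (x.1 j), by
      show eval (fun j => E (x.1 j)) (f.map (Ideal.Quotient.mk (Ideal.span {π}))) = 0
      rw [hmapE, eval_comp_hom, x.2.1, map_zero], by
      obtain ⟨j, hj⟩ := x.2.2
      exact ⟨j, hj.map E⟩⟩) ⟨?_, ?_⟩)
  · -- injective
    intro x x' h
    apply Subtype.ext
    funext j
    have hv : E (x.1 j) = E (x'.1 j) := congrFun (congrArg Subtype.val h) j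
    obtain ⟨u, hu⟩ := Ideal.Quotient.mk_surjective (x.1 j)
    obtain ⟨u', hu'⟩ := Ideal.Quotient.mk_surjective (x'.1 j)
    rw [← hu, ← hu', hEmk, hEmk, Ideal.Quotient.mk_eq_mk_iff_sub_mem] at hv
    show x.1 j = x'.1 j
    rw [← hu, ← hu', Ideal.Quotient.mk_eq_mk_iff_sub_mem, hspan]
    exact hv
  · -- surjective
    rintro ⟨xv, h1, h2⟩
    choose yr hyr using fun j => Ideal.Quotient.mk_surjective (xv j)
    have hxv : xv = fun j => Ideal.Quotient.mk (Ideal.span {π}) (yr j) := by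
      funext j
      rw [hyr j]
    refine ⟨⟨fun j => Ideal.Quotient.mk (Ideal.span {π ^ 1}) (yr j), ?_, ?_⟩, ?_⟩
    · rw [eval_mk, Ideal.Quotient.eq_zero_iff_mem, hspan, ← Ideal.Quotient.eq_zero_iff_mem]
      have h1' : eval (fun j => Ideal.Quotient.mk (Ideal.span {π}) (yr j))
          (f.map (Ideal.Quotient.mk (Ideal.span {π}))) = 0 := by
        rw [← hxv]
        exact h1
      rwa [eval_comp_hom] at h1'
    · obtain ⟨j, hj⟩ := h2
      refine ⟨j, ?_⟩
      show IsUnit (Ideal.Quotient.mk (Ideal.span {π ^ 1}) (yr j))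
      rw [isUnit_mk_iff hπ le_rfl]
      rw [hxv] at hj
      exact (hkunit (yr j)).mp hj
    · apply Subtype.ext
      funext j
      show E (Ideal.Quotient.mk (Ideal.span {π ^ 1}) (yr j)) = xv j
      rw [hEmk, hyr j]

lemma main_formula (hπ : Irreducible π) {d : ℕ} (hd : 1 ≤ d)
    {f : MvPolynomial (Fin (n+1)) R} (hf : f.IsHomogeneous d) :
    ∀ r : ℕ, 1 ≤ r →
      NA π f r = (∑ i ∈ Finset.range ((r + d - 1) / d),
          Nat.card (R ⧸ Ideal.span {π}) ^ ((n + 1) * (d - 1) * i) * NU π f (r - d * i))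
        + Nat.card (R ⧸ Ideal.span {π}) ^ ((n + 1) * (r - (r + d - 1) / d)) := by
  intro r
  induction r using Nat.strong_induction_on with
  | _ r ih =>
  intro hr
  set q := Nat.card (R ⧸ Ideal.span {π}) with hq
  obtain ⟨s, rfl⟩ : ∃ s, r = 1 + s := ⟨r - 1, by omega⟩
  by_cases hcase : 1 + s ≤ d
  · -- small case
    have hc : (1 + s + d - 1) / d = 1 :=
      Nat.div_eq_of_lt_le (by omega) (by omega)
    rw [hc, Finset.sum_range_one]
    simp only [mul_zero, Nat.sub_zero, Nat.mul_zero, pow_zero, one_mul]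
    rw [NA_split hπ f (1+s), NN_eq hπ hd hf s, NB_triv hπ f (show s ≤ d - 1 by omega)]
    congr 1
    rw [← pow_mul]
    congr 1
    rw [show 1 + s - 1 = s from by omega]
    exact Nat.mul_comm _ _
  · -- large case
    push_neg at hcase
    set b := s - (d - 1) with hb
    have hsb : s = b + (d - 1) := by omega
    have hrb : 1 + s = b + d := by omega
    have hb1 : 1 ≤ b := by omega
    have hblt : b < 1 + s := by omega
    set cb := (b + d - 1) / d with hcb
    have hc : (1 + s + d - 1) / d = cb + 1 := by
      have h1 : 1 + s + d - 1 = (b + d - 1) + d := by omega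
      rw [h1, Nat.add_div_right _ (show 0 < d by omega)]
    have hcbb : cb ≤ b := by
      have h1 : cb * d ≤ b + d - 1 := Nat.div_mul_le_self _ _
      by_contra hlt
      push_neg at hlt
      have h4 : (b + 1) * d ≤ cb * d := Nat.mul_le_mul_right d hlt
      have h3 : b ≤ b * d := Nat.le_mul_of_pos_right b (by omega)
      have h5 : b + d ≤ (b + 1) * d := by
        rw [add_mul, one_mul]
        omega
      omega
    -- rewrite NA at 1+s
    rw [NA_split hπ f (1+s), NN_eq hπ hd hf s]
    have hNB : Nat.card {y : Fin (n + 1) → Q π s //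
          Ideal.Quotient.mk (Ideal.span {π ^ s}) (π ^ (d-1))
            * eval y (f.map (Ideal.Quotient.mk (Ideal.span {π ^ s}))) = 0}
        = (q ^ (d-1)) ^ (n+1) * NA π f b := by
      have h := NB_reduce hπ f b (d-1)
      rw [← hsb] at h
      exact h
    rw [hNB, ih b hblt hb1, hc]
    -- expand the sum
    rw [Finset.sum_range_succ' _ cb]
    have hterm0 : q ^ ((n + 1) * (d - 1) * 0) * NU π f (1 + s - d * 0) = NU π f (1+s) := by
      simp
    rw [hterm0]
    have hterm : ∀ i, q ^ ((n + 1) * (d - 1) * (i+1)) * NU π f (1 + s - d * (i+1))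
        = q ^ ((n+1) * (d-1)) * (q ^ ((n + 1) * (d - 1) * i) * NU π f (b - d * i)) := by
      intro i
      have h1 : 1 + s - d * (i+1) = b - d * i := by
        have : d * (i + 1) = d * i + d := by ring
        omega
      rw [h1, ← mul_assoc, ← pow_add]
      congr 2
      ring
    have hsum : ∑ i ∈ Finset.range cb, q ^ ((n + 1) * (d - 1) * (i+1)) * NU π f (1 + s - d * (i+1))
        = q ^ ((n+1) * (d-1)) * ∑ i ∈ Finset.range cb,
            q ^ ((n + 1) * (d - 1) * i) * NU π f (b - d * i) := by
      rw [Finset.mul_sum]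
      exact Finset.sum_congr rfl fun i _ => hterm i
    rw [hsum]
    have hpow : (q ^ (d-1)) ^ (n+1) = q ^ ((n+1) * (d-1)) := by
      rw [← pow_mul]
      congr 1
      ring
    have hlast : q ^ ((n + 1) * (1 + s - (cb + 1)))
        = q ^ ((n+1) * (d-1)) * q ^ ((n + 1) * (b - cb)) := by
      rw [← pow_add]
      congr 1
      have hx : 1 + s - (cb + 1) = (d - 1) + (b - cb) := by omega
      rw [hx]
      ring
    rw [hpow, hlast]
    ring

end Assemble

end Stmt15


/-- Let `R` be a (Henselian) discrete valuation ring with uniformizer `π`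
and finite residue field `κ = R/π`, and `f ∈ R[x₀,…,x_n]` homogeneous of degree `d ≥ 1`
whose affine cone `CX = {f = 0}` is smooth away from the origin over `κ`.  Then for
`r ≥ 1`,
`#CX(R/π^r) = Σ_{i=0}^{⌈r/d⌉−1} (#κ)^{(n+1)(d−1)i} · #(CX∖0)(R/π^{r−di})
  + (#κ)^{(n+1)(r−⌈r/d⌉)}`,
where `(CX∖0)(R/π^m)` is the set of solutions with at least one unit coordinate.
Moreover, by Hensel's lemma, `#(CX∖0)(R/π^m) = (#κ)^{(m−1)n} · #(CX∖0)(κ)` for `m ≥ 1`.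
Here `⌈r/d⌉ = (r + d − 1)/d` in natural-number division. -/
theorem stmt_15 (R : Type*) [CommRing R] [IsDomain R] [IsDiscreteValuationRing R]
    [HenselianLocalRing R]
    (π : R) (hπ : Irreducible π)
    [Finite (R ⧸ Ideal.span {π})]
    (n d : ℕ) (hd : 1 ≤ d)
    (f : MvPolynomial (Fin (n + 1)) R) (hf : f.IsHomogeneous d)
    (hsmooth : ∀ x : Fin (n + 1) → R ⧸ Ideal.span {π},
      (∃ j, x j ≠ 0) →
      MvPolynomial.eval x (f.map (Ideal.Quotient.mk (Ideal.span {π}))) = 0 →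
      ∃ j, MvPolynomial.eval x
        (MvPolynomial.pderiv j (f.map (Ideal.Quotient.mk (Ideal.span {π})))) ≠ 0)
    (r : ℕ) (hr : 1 ≤ r) :
    (Nat.card {x : Fin (n + 1) → R ⧸ Ideal.span {π ^ r} //
        MvPolynomial.eval x (f.map (Ideal.Quotient.mk (Ideal.span {π ^ r}))) = 0} =
      (∑ i ∈ Finset.range ((r + d - 1) / d),
        Nat.card (R ⧸ Ideal.span {π}) ^ ((n + 1) * (d - 1) * i) *
          Nat.card {x : Fin (n + 1) → R ⧸ Ideal.span {π ^ (r - d * i)} //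
            MvPolynomial.eval x
              (f.map (Ideal.Quotient.mk (Ideal.span {π ^ (r - d * i)}))) = 0 ∧
            ∃ j, IsUnit (x j)}) +
      Nat.card (R ⧸ Ideal.span {π}) ^ ((n + 1) * (r - (r + d - 1) / d))) ∧
    ∀ m : ℕ, 1 ≤ m →
      Nat.card {x : Fin (n + 1) → R ⧸ Ideal.span {π ^ m} //
          MvPolynomial.eval x
            (f.map (Ideal.Quotient.mk (Ideal.span {π ^ m}))) = 0 ∧
          ∃ j, IsUnit (x j)} =
        Nat.card (R ⧸ Ideal.span {π}) ^ ((m - 1) * n) *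
          Nat.card {x : Fin (n + 1) → R ⧸ Ideal.span {π} //
            MvPolynomial.eval x
              (f.map (Ideal.Quotient.mk (Ideal.span {π}))) = 0 ∧
            ∃ j, IsUnit (x j)} := by
  constructor
  · exact Stmt15.main_formula hπ hd hf r hr
  · intro m hm
    have h := Stmt15.NU_closed hπ f hsmooth m hm
    rw [Stmt15.NU_one_eq hπ f] at h
    exact h
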